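/- For all nonnegative integers r and s, the quiver Γ^{r+s+4}_{r,s,0} of coloured oriented single and paired diagonals of a regular (r+s+4)-gon is isomorphic as a stable translation quiver to Z A_{r+s+1}/⟨τ^{-(r+s+4)}⟩; this quotient is the Auslander–Reiten quiver of the 2-repetitive cluster category C²_{A_{r+s+1}} = D^b(mod kA_{r+s+1})/(τ^{-1}Σ)², on which (τ^{-1}Σ)² acts as τ^{-(r+s+4)}. In particular, for s = 0 the quiver Γ^{r+4}_{r,0,0} of paired oriented diagonals of a regular (r+4)-gon is isomorphic to Z A_{r+1}/⟨τ^{-(r+4)}⟩ and always lies on a cylinder. -/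

import Mathlib

/-!
Coloured oriented single and paired diagonals in a regular polygon, following
L. Lamberti, "Combinatorial model for the cluster categories of type E".

The vertices of the regular `m`-gon `Π` are labelled by `ZMod m` (clockwise).
A coloured oriented diagonal `[i,j]_c` is encoded by the structure `Diag`;
the colour `P` encodes a *paired* diagonal `[i,j]_P = {[i,j]_R, [j,i]_B}`.
-/

inductive Colour : Type
  | R : Colour
  | B : Colour
  | P : Colour
deriving DecidableEq

/-- A coloured oriented (single or paired) diagonal `[i,j]_c` of the regular
`m`-gon (for `m = 0` we interpret `ZMod 0 = ℤ` as the infinite-sided polygon). -/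
structure Diag (m : ℕ) where
  i : ZMod m
  j : ZMod m
  c : Colour
deriving DecidableEq

/-- The simultaneous change of colour and orientation:
`ρ([i,j]_R) = [j,i]_B`, `ρ([i,j]_B) = [j,i]_R`, `ρ([i,j]_P) = [i,j]_P`. -/
def rho {m : ℕ} : Diag m → Diag m
  | ⟨i, j, Colour.R⟩ => ⟨j, i, Colour.B⟩
  | ⟨i, j, Colour.B⟩ => ⟨j, i, Colour.R⟩
  | ⟨i, j, Colour.P⟩ => ⟨i, j, Colour.P⟩

/-- The anticlockwise rotation `[i,j]_c ↦ [i-1,j-1]_c`. -/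
def shiftD {m : ℕ} (d : Diag m) : Diag m := ⟨d.i - 1, d.j - 1, d.c⟩

/-- The slice of `Π_{r,s,t}` based at the vertex `i` of `Π`:
the paired diagonals `[i,i+2]_P, …, [i,i+r+2]_P`, the red single diagonals
`[i,i+r+3]_R, …, [i,i+r+s+2]_R` and the blue single diagonals
`[i+r+3,i]_B, …, [i+r+t+2,i]_B`. -/
def PiSetAt (r s t : ℕ) {m : ℕ} (i : ZMod m) : Set (Diag m) :=
  {d | (∃ k : ℕ, 2 ≤ k ∧ k ≤ r + 2 ∧ d = ⟨i, i + (k : ZMod m), Colour.P⟩) ∨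
       (∃ k : ℕ, r + 3 ≤ k ∧ k ≤ r + s + 2 ∧ d = ⟨i, i + (k : ZMod m), Colour.R⟩) ∨
       (∃ k : ℕ, r + 3 ≤ k ∧ k ≤ r + t + 2 ∧ d = ⟨i + (k : ZMod m), i, Colour.B⟩)}

/-- The set `Π_{r,s,t}` of coloured oriented single and paired diagonals of the
regular `m`-gon associated to the tree `T_{r,s,t}`. -/
def PiSet (r s t m : ℕ) : Set (Diag m) := ⋃ i : ZMod m, PiSetAt r s t i

open Classical in
/-- The translation `τ` on coloured oriented diagonals: the anticlockwise
rotation `[i,j]_c ↦ [i-1,j-1]_c`, composed with `ρ^{m}` on the first slice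
`Π_{r,s,t}|_1` when the tree is symmetric (`s = t`). -/
noncomputable def tauD (r s t : ℕ) {m : ℕ} (d : Diag m) : Diag m :=
  if s = t ∧ d ∈ PiSetAt r s t (1 : ZMod m) then rho^[m] (shiftD d) else shiftD d

/-- Minimal clockwise rotations (before the colour adjustment at the seam):
`[k,l]_c → [k,l+1]_c`, `[k,l]_c → [k+1,l]_c`, together with
`[k,k+r+2]_P → [k,k+r+3]_R`, `[k,k+r+2]_P → [k+r+3,k]_B`,
`[k,k+r+3]_R → [k+1,k+r+3]_P` and `[k+r+3,k]_B → [k+1,k+r+3]_P`. -/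
def Rot (r : ℕ) {m : ℕ} (a b : Diag m) : Prop :=
  b = ⟨a.i, a.j + 1, a.c⟩ ∨ b = ⟨a.i + 1, a.j, a.c⟩ ∨
  (∃ k : ZMod m, a = ⟨k, k + ((r : ZMod m) + 2), Colour.P⟩ ∧
    (b = ⟨k, k + ((r : ZMod m) + 3), Colour.R⟩ ∨
     b = ⟨k + ((r : ZMod m) + 3), k, Colour.B⟩)) ∨
  (∃ k : ZMod m,
    (a = ⟨k, k + ((r : ZMod m) + 3), Colour.R⟩ ∨
     a = ⟨k + ((r : ZMod m) + 3), k, Colour.B⟩) ∧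
    b = ⟨k + 1, k + ((r : ZMod m) + 3), Colour.P⟩)

/-- In the symmetric case `s = t` with an odd-sided polygon, the arrows whose
source lies in `τ(Π_{r,t,t}|_1)` and whose (unadjusted) target lies in the
first slice `Π_{r,t,t}|_1` additionally change colour and orientation. -/
def SeamTwist (r s t m : ℕ) (a b₀ : Diag m) : Prop :=
  s = t ∧ Odd m ∧ a ∈ (tauD r s t) '' (PiSetAt r s t (1 : ZMod m)) ∧
    b₀ ∈ PiSetAt r s t (1 : ZMod m)

/-- The arrows of the quiver `Γ^{m}_{r,s,t}`: minimal clockwise rotations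
between elements of `Π_{r,s,t}`, adjusted by `ρ` at the seam. -/
def ArrowD (r s t m : ℕ) (a b : Diag m) : Prop :=
  a ∈ PiSet r s t m ∧ b ∈ PiSet r s t m ∧
    ∃ b₀, Rot r a b₀ ∧
      ((SeamTwist r s t m a b₀ ∧ b = rho b₀) ∨ (¬ SeamTwist r s t m a b₀ ∧ b = b₀))

/-- The vertices of the tree `T_{r,s,t}`: a central vertex together with three
legs having `r`, `s`, `t` vertices respectively. -/
inductive TVert (r s t : ℕ) : Type
  | center : TVert r s t
  | legA : Fin r → TVert r s t
  | legB : Fin s → TVert r s t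
  | legC : Fin t → TVert r s t
deriving DecidableEq

/-- An orientation of the tree `T_{r,s,t}`: the `A`-leg points towards the
centre, the `B`- and `C`-legs point away from it. -/
def TArrow {r s t : ℕ} (x y : TVert r s t) : Prop :=
  (∃ k l : Fin r, (l : ℕ) + 1 = (k : ℕ) ∧ x = TVert.legA k ∧ y = TVert.legA l) ∨
  (∃ k : Fin r, (k : ℕ) = 0 ∧ x = TVert.legA k ∧ y = TVert.center) ∨
  (∃ k : Fin s, (k : ℕ) = 0 ∧ x = TVert.center ∧ y = TVert.legB k) ∨
  (∃ k l : Fin s, (k : ℕ) + 1 = (l : ℕ) ∧ x = TVert.legB k ∧ y = TVert.legB l) ∨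
  (∃ k : Fin t, (k : ℕ) = 0 ∧ x = TVert.center ∧ y = TVert.legC k) ∨
  (∃ k l : Fin t, (k : ℕ) + 1 = (l : ℕ) ∧ x = TVert.legC k ∧ y = TVert.legC l)

/-- The order-two graph automorphism of a symmetric tree `T_{r,t,t}`,
exchanging its two legs of length `t`. -/
def treeRho {r t : ℕ} : TVert r t t → TVert r t t
  | TVert.center => TVert.center
  | TVert.legA k => TVert.legA k
  | TVert.legB k => TVert.legC k
  | TVert.legC k => TVert.legB k

/-- `treeRho` as a permutation. -/
def treeRhoPerm (r t : ℕ) : Equiv.Perm (TVert r t t) :=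
  Function.Involutive.toPerm treeRho (by intro x; cases x <;> rfl)

/-- The translation of the repetitive quiver `ℤQ`: `τ(m,i) = (m-1,i)`. -/
def ZTau {V : Type} (x : ℤ × V) : ℤ × V := (x.1 - 1, x.2)

/-- The arrows of the repetitive quiver `ℤQ` of a quiver with arrow relation
`A`: for each arrow `i → j` of `Q` there are arrows `(m,i) → (m,j)` and
`(m,j) → (m+1,i)`. -/
def ZArrow {V : Type} (A : V → V → Prop) (x y : ℤ × V) : Prop :=
  (y.1 = x.1 ∧ A x.2 y.2) ∨ (y.1 = x.1 + 1 ∧ A y.2 x.2)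

/-- The automorphism `τ^{-m} σ` of `ℤQ` given by shifting `m` steps to the
right and applying the graph automorphism `σ` of `Q`. -/
def shiftPerm {V : Type} (m : ℕ) (σ : Equiv.Perm V) : Equiv.Perm (ℤ × V) :=
  (Equiv.addRight (m : ℤ)).prodCongr σ

/-- `φ` exhibits the quiver `Γ^{m}_{r,s,t}` (with vertex set `PiSet r s t m`,
arrow relation `ArrowD` and translation `tauD`) as the quotient of the
repetitive quiver `ℤQ` (with arrow relation `ZArrow A` and translation `ZTau`)
by the cyclic group generated by the automorphism `g`, as stable translation
quivers: `φ` is surjective onto the vertex set, its fibres are exactly the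
`g`-orbits, it commutes with the translations, and the arrows of
`Γ^{m}_{r,s,t}` correspond exactly to the `g`-orbits of arrows of `ℤQ`. -/
def IsQuotientIso (r s t m : ℕ) {V : Type} (A : V → V → Prop)
    (g : Equiv.Perm (ℤ × V)) (φ : ℤ × V → Diag m) : Prop :=
  (∀ x, φ x ∈ PiSet r s t m) ∧
  (∀ d ∈ PiSet r s t m, ∃ x, φ x = d) ∧
  (∀ x y, φ x = φ y ↔ ∃ k : ℤ, (g ^ k) x = y) ∧
  (∀ x, φ (ZTau x) = tauD r s t (φ x)) ∧
  (∀ x y, ArrowD r s t m (φ x) (φ y) ↔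
    ∃ y', (∃ k : ℤ, (g ^ k) y = y') ∧ ZArrow A x y')

/-! ### Auxiliary material for the proof -/

section Aux

/-- The distance from a vertex of `T_{n,0,0}` to the end of the path
(the `center` has level `0`, `legA k` has level `k+1`). -/
def lev {a b c : ℕ} : TVert a b c → ℕ
  | .center => 0
  | .legA k => (k : ℕ) + 1
  | .legB k => (k : ℕ) + 1
  | .legC k => (k : ℕ) + 1

lemma lev_le {n : ℕ} : ∀ v : TVert n 0 0, lev v ≤ n
  | .center => Nat.zero_le _
  | .legA k => k.isLt
  | .legB k => k.elim0
  | .legC k => k.elim0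

lemma lev_inj {n : ℕ} : ∀ v w : TVert n 0 0, lev v = lev w → v = w
  | .center, .center, _ => rfl
  | .center, .legA _, h => by simp [lev] at h
  | .legA _, .center, h => by simp [lev] at h
  | .legA k, .legA l, h => by
      simp only [lev, Nat.add_right_cancel_iff] at h
      exact congrArg TVert.legA (Fin.ext h)
  | .legB k, _, _ => k.elim0
  | .legC k, _, _ => k.elim0
  | _, .legB k, _ => k.elim0
  | _, .legC k, _ => k.elim0

lemma tarrow_iff {n : ℕ} (x y : TVert n 0 0) : TArrow x y ↔ lev y + 1 = lev x := by
  constructor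
  · rintro (⟨k, l, hkl, rfl, rfl⟩ | ⟨k, hk, rfl, rfl⟩ | ⟨k, _, _, _⟩ | ⟨k, _, _, _, _⟩ |
        ⟨k, _, _, _⟩ | ⟨k, _, _, _, _⟩) <;> first
      | exact k.elim0
      | simp [lev] <;> omega
  · intro h
    cases x with
    | center => simp [lev] at h
    | legB k => exact k.elim0
    | legC k => exact k.elim0
    | legA k =>
      cases y with
      | center =>
        refine Or.inr (Or.inl ⟨k, ?_, rfl, rfl⟩)
        simp [lev] at h; omega
      | legB l => exact l.elim0
      | legC l => exact l.elim0
      | legA l =>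
        refine Or.inl ⟨k, l, ?_, rfl, rfl⟩
        simp [lev] at h; omega

/-- Construct the vertex of given level. -/
def vertOf {n : ℕ} : (l : ℕ) → l ≤ n → TVert n 0 0
  | 0, _ => .center
  | l + 1, h => .legA ⟨l, h⟩

lemma lev_vertOf {n : ℕ} : ∀ (l : ℕ) (h : l ≤ n), lev (vertOf l h) = l
  | 0, _ => rfl
  | _ + 1, _ => rfl

lemma rho_rho {m : ℕ} (d : Diag m) : rho (rho d) = d := by
  obtain ⟨i, j, c⟩ := d; cases c <;> rfl

lemma small_dvd_zero {m : ℕ} {z k : ℤ} (h : z = (m : ℤ) * k) (h1 : -(m : ℤ) < z)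
    (h2 : z < m) : z = 0 := by
  rcases lt_trichotomy k 0 with hk | hk | hk
  · have : (m : ℤ) * k ≤ (m : ℤ) * (-1) :=
      mul_le_mul_of_nonneg_left (by omega) (by exact_mod_cast Nat.zero_le m)
    nlinarith
  · simp [hk] at h; omega
  · have : (m : ℤ) * 1 ≤ (m : ℤ) * k :=
      mul_le_mul_of_nonneg_left (by omega) (by exact_mod_cast Nat.zero_le m)
    nlinarith

lemma nat_eq_of_zmod {m a b : ℕ} [NeZero m] (ha : a < m) (hb : b < m)
    (h : (((a : ℤ) - (b : ℤ) : ℤ) : ZMod m) = 0) : a = b := by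
  obtain ⟨k, hk⟩ := (ZMod.intCast_zmod_eq_zero_iff_dvd _ _).mp h
  have := small_dvd_zero hk (by omega) (by omega)
  omega

lemma shiftPerm_apply {V : Type} (m : ℕ) (x : ℤ × V) :
    shiftPerm m (1 : Equiv.Perm V) x = (x.1 + m, x.2) := rfl

lemma shiftPerm_symm_apply {V : Type} (m : ℕ) (x : ℤ × V) :
    (shiftPerm m (1 : Equiv.Perm V))⁻¹ x = (x.1 - m, x.2) := rfl

lemma shiftPerm_zpow {V : Type} (m : ℕ) (k : ℤ) :
    ∀ x : ℤ × V, ((shiftPerm m (1 : Equiv.Perm V)) ^ k) x = (x.1 + k * m, x.2) := by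
  induction k using Int.induction_on with
  | zero => intro x; simp
  | succ n ih =>
      intro x
      rw [zpow_add_one, Equiv.Perm.mul_apply, shiftPerm_apply, ih]
      simp only [Prod.mk.injEq, and_true]
      push_cast; ring
  | pred n ih =>
      intro x
      rw [zpow_sub_one, Equiv.Perm.mul_apply, shiftPerm_symm_apply, ih]
      simp only [Prod.mk.injEq, and_true]
      push_cast; ring

/-- The isomorphism: `(p, v) ↦ [p - lev v, p + 2]` with colour `P` on the
`r+1` paired levels and `R` on the `s` red levels. -/
def phiA (r s : ℕ) (x : ℤ × TVert (r + s) 0 0) : Diag (r + s + 4) :=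
  ⟨((x.1 - (lev x.2 : ℤ) : ℤ) : ZMod (r + s + 4)), ((x.1 + 2 : ℤ) : ZMod (r + s + 4)),
    if lev x.2 ≤ r then Colour.P else Colour.R⟩

lemma hm_zero (r s : ℕ) : ((r : ZMod (r + s + 4)) + (s : ZMod (r + s + 4)) + 4) = 0 := by
  have h := ZMod.natCast_self (r + s + 4)
  push_cast at h
  linear_combination h

lemma phiA_mem (r s : ℕ) (x : ℤ × TVert (r + s) 0 0) :
    phiA r s x ∈ PiSet r s 0 (r + s + 4) := by
  have hle := lev_le x.2
  simp only [PiSet, Set.mem_iUnion]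
  refine ⟨((x.1 - (lev x.2 : ℤ) : ℤ) : ZMod (r + s + 4)), ?_⟩
  simp only [PiSetAt, Set.mem_setOf_eq]
  by_cases h : lev x.2 ≤ r
  · refine Or.inl ⟨lev x.2 + 2, by omega, by omega, ?_⟩
    simp only [phiA, if_pos h, Diag.mk.injEq]
    exact ⟨trivial, by push_cast; ring, trivial⟩
  · refine Or.inr (Or.inl ⟨lev x.2 + 2, by omega, by omega, ?_⟩)
    simp only [phiA, if_neg h, Diag.mk.injEq]
    exact ⟨trivial, by push_cast; ring, trivial⟩

lemma phiA_surj (r s : ℕ) (d : Diag (r + s + 4)) (hd : d ∈ PiSet r s 0 (r + s + 4)) :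
    ∃ x, phiA r s x = d := by
  haveI : NeZero (r + s + 4) := ⟨by omega⟩
  simp only [PiSet, Set.mem_iUnion, PiSetAt, Set.mem_setOf_eq] at hd
  obtain ⟨i, hd⟩ := hd
  have hiv : ((i.val : ℕ) : ZMod (r + s + 4)) = i := by
    have := ZMod.natCast_val (n := r + s + 4) (R := ZMod (r + s + 4)) i
    rwa [ZMod.cast_id] at this
  rcases hd with ⟨k, hk2, hkr, rfl⟩ | ⟨k, hk2, hkr, rfl⟩ | ⟨k, hk2, hkr, _⟩
  · obtain ⟨l, rfl⟩ : ∃ l, k = l + 2 := ⟨k - 2, by omega⟩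
    refine ⟨((i.val : ℤ) + l, vertOf l (by omega)), ?_⟩
    simp only [phiA, lev_vertOf, Diag.mk.injEq]
    refine ⟨?_, ?_, ?_⟩
    · push_cast; rw [add_sub_cancel_right]; exact_mod_cast hiv
    · push_cast; linear_combination hiv
    · rw [if_pos (by omega)]
  · obtain ⟨l, rfl⟩ : ∃ l, k = l + 2 := ⟨k - 2, by omega⟩
    refine ⟨((i.val : ℤ) + l, vertOf l (by omega)), ?_⟩
    simp only [phiA, lev_vertOf, Diag.mk.injEq]
    refine ⟨?_, ?_, ?_⟩
    · push_cast; rw [add_sub_cancel_right]; exact_mod_cast hiv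
    · push_cast; linear_combination hiv
    · rw [if_neg (by omega)]
  · omega

lemma colour_ne_B (r s : ℕ) (x : ℤ × TVert (r + s) 0 0) :
    (phiA r s x).c ≠ Colour.B := by
  simp only [phiA]
  split_ifs <;> simp

lemma phiA_fib (r s : ℕ) (x y : ℤ × TVert (r + s) 0 0) :
    phiA r s x = phiA r s y ↔
      ∃ k : ℤ, ((shiftPerm (r + s + 4) (1 : Equiv.Perm (TVert (r + s) 0 0))) ^ k) x = y := by
  haveI : NeZero (r + s + 4) := ⟨by omega⟩
  obtain ⟨p, u⟩ := x; obtain ⟨q, w⟩ := y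
  have hau := lev_le u; have haw := lev_le w
  have hm := hm_zero r s
  constructor
  · intro h
    simp only [phiA, Diag.mk.injEq] at h
    obtain ⟨h1, h2, _⟩ := h
    have e1 : ((q - p : ℤ) : ZMod (r + s + 4)) = 0 := by
      push_cast at h2 ⊢; linear_combination -h2
    obtain ⟨k, hk⟩ := (ZMod.intCast_zmod_eq_zero_iff_dvd _ _).mp e1
    have e2 : (((lev u : ℤ) - (lev w : ℤ) : ℤ) : ZMod (r + s + 4)) = 0 := by
      push_cast at h1 h2 ⊢; linear_combination h2 - h1
    have huw : lev u = lev w := nat_eq_of_zmod (by omega) (by omega) e2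
    refine ⟨k, ?_⟩
    rw [shiftPerm_zpow]
    exact Prod.ext (by dsimp; push_cast at hk; linarith) (lev_inj _ _ huw)
  · rintro ⟨k, hk⟩
    rw [shiftPerm_zpow] at hk
    obtain ⟨rfl, rfl⟩ := Prod.ext_iff.mp hk
    simp only [phiA, Diag.mk.injEq]
    refine ⟨?_, ?_, trivial⟩
    · push_cast; linear_combination -(k : ZMod (r + s + 4)) * hm
    · push_cast; linear_combination -(k : ZMod (r + s + 4)) * hm

lemma rho_fix {m : ℕ} (d : Diag m) (h : d.c = Colour.P) : rho d = d := by
  obtain ⟨i, j, c⟩ := d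
  cases c <;> simp_all [rho]

lemma phiA_colour_P (r s : ℕ) (hs : s = 0) (x : ℤ × TVert (r + s) 0 0) :
    (phiA r s x).c = Colour.P := by
  have := lev_le x.2
  simp only [phiA]
  rw [if_pos (by omega)]

lemma phiA_tau (r s : ℕ) (x : ℤ × TVert (r + s) 0 0) :
    phiA r s (ZTau x) = tauD r s 0 (phiA r s x) := by
  have hstep : phiA r s (ZTau x) = shiftD (phiA r s x) := by
    simp only [phiA, ZTau, shiftD, Diag.mk.injEq]
    refine ⟨?_, ?_, rfl⟩ <;> (push_cast; ring)
  rw [hstep]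
  unfold tauD
  split_ifs with h
  · obtain ⟨hs, -⟩ := h
    have hP : (shiftD (phiA r s x)).c = Colour.P := by
      simp only [shiftD]; exact phiA_colour_P r s hs x
    rw [Function.iterate_fixed (rho_fix _ hP)]
  · rfl

lemma rot_iff (r s : ℕ) (x y : ℤ × TVert (r + s) 0 0) :
    Rot r (phiA r s x) (phiA r s y) ↔
      ((∃ k : ℤ, y.1 = x.1 + 1 + k * (r + s + 4)) ∧ lev y.2 = lev x.2 + 1) ∨
      ((∃ k : ℤ, y.1 = x.1 + k * (r + s + 4)) ∧ lev y.2 + 1 = lev x.2) := by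
  haveI : NeZero (r + s + 4) := ⟨by omega⟩
  obtain ⟨p, u⟩ := x; obtain ⟨q, w⟩ := y
  have hau := lev_le u; have haw := lev_le w
  have hm := hm_zero r s
  dsimp only
  constructor
  · intro h
    rcases h with h | h | ⟨κ, hx, hy⟩ | ⟨κ, hx, hy⟩
    · simp only [phiA, Diag.mk.injEq] at h
      obtain ⟨h1, h2, -⟩ := h
      have e1 : ((q - p - 1 : ℤ) : ZMod (r + s + 4)) = 0 := by
        push_cast at h2 ⊢; linear_combination h2
      have e2 : ((((lev w : ℕ) : ℤ) - (((lev u + 1 : ℕ) : ℕ) : ℤ) : ℤ) : ZMod (r + s + 4)) = 0 := by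
        push_cast at h1 h2 ⊢; linear_combination h2 - h1
      obtain ⟨k, hk⟩ := (ZMod.intCast_zmod_eq_zero_iff_dvd _ _).mp e1
      exact Or.inl ⟨⟨k, by push_cast at hk ⊢; linarith⟩,
        nat_eq_of_zmod (by omega) (by omega) e2⟩
    · simp only [phiA, Diag.mk.injEq] at h
      obtain ⟨h1, h2, -⟩ := h
      have e1 : ((q - p : ℤ) : ZMod (r + s + 4)) = 0 := by
        push_cast at h2 ⊢; linear_combination h2
      have e2 : (((((lev w + 1 : ℕ) : ℕ) : ℤ) - ((lev u : ℕ) : ℤ) : ℤ) : ZMod (r + s + 4)) = 0 := by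
        push_cast at h1 h2 ⊢; linear_combination h2 - h1
      obtain ⟨k, hk⟩ := (ZMod.intCast_zmod_eq_zero_iff_dvd _ _).mp e1
      exact Or.inr ⟨⟨k, by push_cast at hk ⊢; linarith⟩,
        nat_eq_of_zmod (by omega) (by omega) e2⟩
    · rcases hy with hy | hy
      swap
      · exfalso; have hh := colour_ne_B r s (q, w); rw [hy] at hh; exact hh rfl
      simp only [phiA, Diag.mk.injEq] at hx hy
      obtain ⟨hx1, hx2, -⟩ := hx
      obtain ⟨hy1, hy2, -⟩ := hy
      have e1 : ((q - p - 1 : ℤ) : ZMod (r + s + 4)) = 0 := by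
        push_cast at hx2 hy2 ⊢; linear_combination hy2 - hx2
      have e1' := e1; push_cast at e1'
      have e2 : ((((lev w : ℕ) : ℤ) - (((lev u + 1 : ℕ) : ℕ) : ℤ) : ℤ) : ZMod (r + s + 4)) = 0 := by
        push_cast at hx1 hy1 ⊢; linear_combination hx1 - hy1 + e1'
      obtain ⟨k, hk⟩ := (ZMod.intCast_zmod_eq_zero_iff_dvd _ _).mp e1
      exact Or.inl ⟨⟨k, by push_cast at hk ⊢; linarith⟩,
        nat_eq_of_zmod (by omega) (by omega) e2⟩
    · rcases hx with hx | hx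
      swap
      · exfalso; have hh := colour_ne_B r s (p, u); rw [hx] at hh; exact hh rfl
      simp only [phiA, Diag.mk.injEq] at hx hy
      obtain ⟨hx1, hx2, -⟩ := hx
      obtain ⟨hy1, hy2, -⟩ := hy
      have e1 : ((q - p : ℤ) : ZMod (r + s + 4)) = 0 := by
        push_cast at hx2 hy2 ⊢; linear_combination hy2 - hx2
      have e1' := e1; push_cast at e1'
      have e2 : (((((lev w + 1 : ℕ) : ℕ) : ℤ) - ((lev u : ℕ) : ℤ) : ℤ) : ZMod (r + s + 4)) = 0 := by
        push_cast at hx1 hy1 ⊢; linear_combination hx1 - hy1 + e1'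
      obtain ⟨k, hk⟩ := (ZMod.intCast_zmod_eq_zero_iff_dvd _ _).mp e1
      exact Or.inr ⟨⟨k, by push_cast at hk ⊢; linarith⟩,
        nat_eq_of_zmod (by omega) (by omega) e2⟩
  · rintro (⟨⟨k, rfl⟩, hb⟩ | ⟨⟨k, rfl⟩, hb⟩)
    · -- lev w = lev u + 1 : arrows increasing k
      rcases Nat.lt_or_ge r (lev w) with hbr | hbr
      rcases Nat.lt_or_ge (r + 1) (lev w) with hbr2 | hbr2
      · -- lev w ≥ r + 2 : clause 1, both R
        refine Or.inl ?_
        simp only [phiA, Diag.mk.injEq]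
        refine ⟨?_, ?_, ?_⟩
        · rw [hb]; push_cast
          first
          | linear_combination ((k : ZMod (r + s + 4))) * hm
          | linear_combination (-(k : ZMod (r + s + 4))) * hm
        · push_cast
          first
          | linear_combination ((k : ZMod (r + s + 4))) * hm
          | linear_combination (-(k : ZMod (r + s + 4))) * hm
        · rw [if_neg (by omega), if_neg (by omega)]
      · -- lev w = r + 1 : clause 3
        have hur : lev u = r := by omega
        have hwr : lev w = r + 1 := by omega
        refine Or.inr (Or.inr (Or.inl ⟨(((p : ℤ) - (lev u : ℤ) : ℤ) : ZMod (r + s + 4)), ?_, Or.inl ?_⟩))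
        · simp only [phiA, Diag.mk.injEq]
          refine ⟨trivial, ?_, ?_⟩
          · rw [hur]; push_cast; ring
          · rw [if_pos (by omega)]
        · simp only [phiA, Diag.mk.injEq]
          refine ⟨?_, ?_, ?_⟩
          · rw [hwr, hur]; push_cast
            first
            | linear_combination ((k : ZMod (r + s + 4))) * hm
            | linear_combination (-(k : ZMod (r + s + 4))) * hm
          · rw [hur]; push_cast
            first
            | linear_combination ((k : ZMod (r + s + 4))) * hm
            | linear_combination (-(k : ZMod (r + s + 4))) * hm
          · rw [if_neg (by omega)]
      · -- lev w ≤ r : clause 1, both P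
        refine Or.inl ?_
        simp only [phiA, Diag.mk.injEq]
        refine ⟨?_, ?_, ?_⟩
        · rw [hb]; push_cast
          first
          | linear_combination ((k : ZMod (r + s + 4))) * hm
          | linear_combination (-(k : ZMod (r + s + 4))) * hm
        · push_cast
          first
          | linear_combination ((k : ZMod (r + s + 4))) * hm
          | linear_combination (-(k : ZMod (r + s + 4))) * hm
        · rw [if_pos (by omega), if_pos (by omega)]
    · -- lev w + 1 = lev u : arrows decreasing k
      rcases Nat.lt_or_ge r (lev u) with hbr | hbr
      rcases Nat.lt_or_ge (r + 1) (lev u) with hbr2 | hbr2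
      · -- lev u ≥ r + 2 : clause 2, both R
        refine Or.inr (Or.inl ?_)
        simp only [phiA, Diag.mk.injEq]
        refine ⟨?_, ?_, ?_⟩
        · rw [← hb]; push_cast
          first
          | linear_combination ((k : ZMod (r + s + 4))) * hm
          | linear_combination (-(k : ZMod (r + s + 4))) * hm
        · push_cast
          first
          | linear_combination ((k : ZMod (r + s + 4))) * hm
          | linear_combination (-(k : ZMod (r + s + 4))) * hm
        · rw [if_neg (by omega), if_neg (by omega)]
      · -- lev u = r + 1 : clause 4
        have hur : lev u = r + 1 := by omega
        have hwr : lev w = r := by omega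
        refine Or.inr (Or.inr (Or.inr ⟨(((p : ℤ) - (lev u : ℤ) : ℤ) : ZMod (r + s + 4)), Or.inl ?_, ?_⟩))
        · simp only [phiA, Diag.mk.injEq]
          refine ⟨trivial, ?_, ?_⟩
          · rw [hur]; push_cast; ring
          · rw [if_neg (by omega)]
        · simp only [phiA, Diag.mk.injEq]
          refine ⟨?_, ?_, ?_⟩
          · rw [hwr, hur]; push_cast
            first
            | linear_combination ((k : ZMod (r + s + 4))) * hm
            | linear_combination (-(k : ZMod (r + s + 4))) * hm
          · rw [hur]; push_cast
            first
            | linear_combination ((k : ZMod (r + s + 4))) * hm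
            | linear_combination (-(k : ZMod (r + s + 4))) * hm
          · rw [if_pos (by omega)]
      · -- lev u ≤ r : clause 2, both P
        refine Or.inr (Or.inl ?_)
        simp only [phiA, Diag.mk.injEq]
        refine ⟨?_, ?_, ?_⟩
        · rw [← hb]; push_cast
          first
          | linear_combination ((k : ZMod (r + s + 4))) * hm
          | linear_combination (-(k : ZMod (r + s + 4))) * hm
        · push_cast
          first
          | linear_combination ((k : ZMod (r + s + 4))) * hm
          | linear_combination (-(k : ZMod (r + s + 4))) * hm
        · rw [if_pos (by omega), if_pos (by omega)]

lemma arrowD_iff (r s : ℕ) (x y : ℤ × TVert (r + s) 0 0) :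
    ArrowD r s 0 (r + s + 4) (phiA r s x) (phiA r s y) ↔
      Rot r (phiA r s x) (phiA r s y) := by
  constructor
  · rintro ⟨-, -, b₀, hrot, (⟨hst, hb⟩ | ⟨-, rfl⟩)⟩
    · unfold SeamTwist at hst
      obtain ⟨hs, -, -, -⟩ := hst
      have hP : (phiA r s y).c = Colour.P := phiA_colour_P r s hs y
      have hb' : phiA r s y = b₀ := by
        have h2 := congrArg rho hb
        rwa [rho_rho, rho_fix _ hP] at h2
      rwa [← hb'] at hrot
    · exact hrot
  · intro hrot
    refine ⟨phiA_mem r s x, phiA_mem r s y, phiA r s y, hrot, ?_⟩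
    by_cases hst : SeamTwist r s 0 (r + s + 4) (phiA r s x) (phiA r s y)
    · left
      refine ⟨hst, ?_⟩
      have hs : s = 0 := by unfold SeamTwist at hst; exact hst.1
      rw [rho_fix _ (phiA_colour_P r s hs y)]
    · right; exact ⟨hst, rfl⟩

lemma master (r s : ℕ) :
    ∃ φ : ℤ × TVert (r + s) 0 0 → Diag (r + s + 4),
      IsQuotientIso r s 0 (r + s + 4) TArrow
        (shiftPerm (r + s + 4) (1 : Equiv.Perm (TVert (r + s) 0 0))) φ := by
  refine ⟨phiA r s, ?_⟩
  unfold IsQuotientIso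
  refine ⟨phiA_mem r s, phiA_surj r s, phiA_fib r s, phiA_tau r s, fun x y => ?_⟩
  rw [arrowD_iff, rot_iff]
  obtain ⟨p, u⟩ := x; obtain ⟨q, w⟩ := y
  dsimp only
  constructor
  · rintro (⟨⟨k, hk⟩, hb⟩ | ⟨⟨k, hk⟩, hb⟩)
    · refine ⟨((shiftPerm (r + s + 4) (1 : Equiv.Perm (TVert (r + s) 0 0))) ^ (-k)) (q, w),
        ⟨-k, rfl⟩, ?_⟩
      rw [shiftPerm_zpow]
      dsimp only
      refine Or.inr ⟨?_, ?_⟩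
      · dsimp only; push_cast; linarith
      · exact (tarrow_iff w u).mpr (by omega)
    · refine ⟨((shiftPerm (r + s + 4) (1 : Equiv.Perm (TVert (r + s) 0 0))) ^ (-k)) (q, w),
        ⟨-k, rfl⟩, ?_⟩
      rw [shiftPerm_zpow]
      dsimp only
      refine Or.inl ⟨?_, ?_⟩
      · dsimp only; push_cast; linarith
      · exact (tarrow_iff u w).mpr (by omega)
  · rintro ⟨y', ⟨k, hk⟩, hz⟩
    rw [shiftPerm_zpow] at hk
    subst hk
    rcases hz with ⟨h1, h2⟩ | ⟨h1, h2⟩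
    · dsimp only at h1 h2
      refine Or.inr ⟨⟨-k, ?_⟩, (tarrow_iff u w).mp h2⟩
      push_cast at h1 ⊢; linarith
    · dsimp only at h1 h2
      have hl := (tarrow_iff w u).mp h2
      refine Or.inl ⟨⟨-k, ?_⟩, by omega⟩
      push_cast at h1 ⊢; linarith

end Aux
/-- Corollary 4.3, type `A`. For all nonnegative integers
`r` and `s`, the quiver `Γ^{r+s+4}_{r,s,0}` of coloured oriented single and
paired diagonals of a regular `(r+s+4)`-gon is isomorphic, as a stable
translation quiver, to `ℤ A_{r+s+1} / ⟨τ^{-(r+s+4)}⟩`, where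
`A_{r+s+1} = T_{r+s,0,0}` is the path with `r+s+1` vertices.  (This quotient
is the AR-quiver of the 2-repetitive cluster category
`C²_{A_{r+s+1}} = D^b(mod k A_{r+s+1})/(τ^{-1}Σ)²`, on which `(τ^{-1}Σ)²` acts
as `τ^{-(r+s+4)}`.)  In particular, for `s = 0` the quiver `Γ^{r+4}_{r,0,0}`
of paired oriented diagonals of a regular `(r+4)`-gon is isomorphic to
`ℤ A_{r+1} / ⟨τ^{-(r+4)}⟩` (an untwisted quotient: it always lies on a
cylinder). -/
theorem gamma_iso_ZA_quotient (r s : ℕ) :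
    (∃ φ : ℤ × TVert (r + s) 0 0 → Diag (r + s + 4),
      IsQuotientIso r s 0 (r + s + 4) TArrow
        (shiftPerm (r + s + 4) (1 : Equiv.Perm (TVert (r + s) 0 0))) φ) ∧
    (∃ φ : ℤ × TVert r 0 0 → Diag (r + 4),
      IsQuotientIso r 0 0 (r + 4) TArrow
        (shiftPerm (r + 4) (1 : Equiv.Perm (TVert r 0 0))) φ) := by
  exact ⟨master r s, master r 0⟩
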